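/- arXiv:1111.1027 — 4 statements merged into one kernel-verified Lean document; each statement's English description precedes it below -/
import Mathlib

section
/- (Moment generating function of the semicircle law as a Bessel-type series.) For every λ ∈ ℝ: (1/(2π)) · ∫_{−2}^{2} e^{λt} · √(4 − t²) dt = Σ_{n=0}^∞ λ^{2n} / ((n+1)! · n!). -/
open Real

open MeasureTheory intervalIntegral


lemma W_rec (n : ℕ) : (∫ x in (-(π/2))..(π/2), sin x ^ (n+2)) =
    ((n:ℝ)+1)/((n:ℝ)+2) * ∫ x in (-(π/2))..(π/2), sin x ^ n := by
  rw [integral_sin_pow]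
  simp

lemma W_odd (n : ℕ) : (∫ x in (-(π/2))..(π/2), sin x ^ (2*n+1)) = 0 := by
  induction n with
  | zero => simp
  | succ k ih =>
      have h : 2*(k+1)+1 = (2*k+1)+2 := by ring
      rw [h, W_rec, ih, mul_zero]

lemma W_even (n : ℕ) : (∫ x in (-(π/2))..(π/2), sin x ^ (2*n)) =
    π * (Nat.factorial (2*n) : ℝ) / (4^n * ((Nat.factorial n : ℝ))^2) := by
  induction n with
  | zero => simp
  | succ k ih =>
      have h : 2*(k+1) = 2*k+2 := by ring
      rw [h, W_rec, ih]
      have h1 : (2*(k+1)).factorial = (2*k+2) * ((2*k+1) * (2*k).factorial) := by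
        rw [show 2*(k+1) = (2*k+1)+1 by ring, Nat.factorial_succ, Nat.factorial_succ]
      rw [show 2*k+2 = 2*(k+1) by ring, h1, Nat.factorial_succ]
      have hk : ((2*k).factorial : ℝ) ≠ 0 := Nat.cast_ne_zero.2 (Nat.factorial_ne_zero _)
      have hk2 : ((k).factorial : ℝ) ≠ 0 := Nat.cast_ne_zero.2 (Nat.factorial_ne_zero _)
      have h4 : (4:ℝ)^k ≠ 0 := by positivity
      push_cast
      field_simp
      ring



lemma subst_lemma (n : ℕ) : (∫ t in (-2:ℝ)..2, t^n * Real.sqrt (4 - t^2)) =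
    2^(n+2) * ∫ x in (-(π/2))..(π/2), sin x ^ n * cos x ^ 2 := by
  have hg : Continuous (fun t : ℝ => t^n * Real.sqrt (4 - t^2)) :=
    (continuous_pow n).mul ((continuous_const.sub (continuous_pow 2)).sqrt)
  have h : ∀ x ∈ Set.uIcc (-(π/2)) (π/2),
      HasDerivAt (fun θ : ℝ => 2 * sin θ) (2 * cos x) x :=
    fun x _ => (hasDerivAt_sin x).const_mul 2
  have h' : ContinuousOn (fun x : ℝ => 2 * cos x) (Set.uIcc (-(π/2)) (π/2)) :=
    (continuous_const.mul continuous_cos).continuousOn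
  have key := integral_comp_mul_deriv h h' hg
  simp only [Function.comp, sin_neg, sin_pi_div_two, mul_one, mul_neg] at key
  rw [← key]
  rw [show (∫ x in (-(π/2))..(π/2), (2*sin x)^n * Real.sqrt (4 - (2*sin x)^2) * (2*cos x))
      = ∫ x in (-(π/2))..(π/2), 2^(n+2) * (sin x ^ n * cos x ^ 2) from ?_,
    intervalIntegral.integral_const_mul]
  apply intervalIntegral.integral_congr
  intro x hx
  rw [Set.uIcc_of_le (by linarith [pi_pos] : -(π/2) ≤ π/2)] at hx
  have hc : 0 ≤ cos x := Real.cos_nonneg_of_mem_Icc hx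
  have h4 : 4 - (2*sin x)^2 = (2*cos x)^2 := by
    have := sin_sq_add_cos_sq x
    nlinarith
  show (2*sin x)^n * Real.sqrt (4 - (2*sin x)^2) * (2*cos x) = 2^(n+2) * (sin x ^ n * cos x ^ 2)
  rw [h4, Real.sqrt_sq (by positivity)]
  ring

lemma sincos_int (n : ℕ) : (∫ x in (-(π/2))..(π/2), sin x ^ n * cos x ^ 2) =
    (∫ x in (-(π/2))..(π/2), sin x ^ n) / ((n:ℝ)+2) := by
  have h1 : (∫ x in (-(π/2))..(π/2), sin x ^ n * cos x ^ 2)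
      = (∫ x in (-(π/2))..(π/2), sin x ^ n) - ∫ x in (-(π/2))..(π/2), sin x ^ (n+2) := by
    rw [← intervalIntegral.integral_sub (f := fun x => sin x ^ n) (g := fun x => sin x ^ (n+2)) ((continuous_sin.pow n).intervalIntegrable _ _)
      ((continuous_sin.pow (n+2)).intervalIntegrable _ _)]
    apply intervalIntegral.integral_congr
    intro x _
    show sin x ^ n * cos x ^ 2 = sin x ^ n - sin x ^ (n+2)
    rw [cos_sq']
    ring
  rw [h1, W_rec]
  have : ((n:ℝ)+2) ≠ 0 := by positivity
  field_simp
  ring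

lemma moment_even (n : ℕ) : (∫ t in (-2:ℝ)..2, t^(2*n) * Real.sqrt (4 - t^2)) =
    2 * π * (Nat.factorial (2*n) : ℝ) /
      ((Nat.factorial n : ℝ) * (Nat.factorial (n+1) : ℝ)) := by
  rw [subst_lemma, sincos_int, W_even, Nat.factorial_succ]
  have hk : ((2*n).factorial : ℝ) ≠ 0 := Nat.cast_ne_zero.2 (Nat.factorial_ne_zero _)
  have hk2 : ((n).factorial : ℝ) ≠ 0 := Nat.cast_ne_zero.2 (Nat.factorial_ne_zero _)
  have h4 : (4:ℝ)^n ≠ 0 := by positivity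
  have h2 : (2:ℝ)^(2*n+2) = 4 * 4^n := by
    rw [pow_add, pow_mul]
    norm_num
    ring
  rw [h2]
  push_cast
  field_simp
  ring

lemma moment_odd (n : ℕ) : (∫ t in (-2:ℝ)..2, t^(2*n+1) * Real.sqrt (4 - t^2)) = 0 := by
  rw [subst_lemma, sincos_int, W_odd]
  simp

/-- **Moment generating function of the semicircle law as a Bessel-type series.** -/
theorem semicircle_mgf_series (l : ℝ) :
    (1 / (2 * π)) * ∫ t in (-2 : ℝ)..2, Real.exp (l * t) * Real.sqrt (4 - t ^ 2) =
      ∑' n : ℕ, l ^ (2 * n) / ((Nat.factorial (n + 1) : ℝ) * (Nat.factorial n : ℝ)) := by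
  set F : ℕ → ℝ → ℝ := fun k t => (l*t)^k / (Nat.factorial k : ℝ) * Real.sqrt (4 - t^2) with hF
  have hFc : ∀ k, Continuous (F k) := fun k =>
    (((continuous_const.mul continuous_id).pow k).div_const _).mul
      ((continuous_const.sub (continuous_pow 2)).sqrt)
  have hF_int : ∀ k, IntegrableOn (F k) (Set.Ioc (-2:ℝ) 2) := fun k =>
    (hFc k).integrableOn_Ioc
  -- bound on integrals of norms
  have hbound : ∀ k, (∫ t in Set.Ioc (-2:ℝ) 2, ‖F k t‖) ≤
      8 * ((2*|l|)^k / (Nat.factorial k : ℝ)) := by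
    intro k
    have hle : ∀ t ∈ Set.Ioc (-2:ℝ) 2, ‖F k t‖ ≤ (2*|l|)^k / (Nat.factorial k : ℝ) * 2 := by
      intro t ht
      have ht2 : |t| ≤ 2 := abs_le.2 ⟨le_of_lt ht.1, ht.2⟩
      have hsq : Real.sqrt (4 - t^2) ≤ 2 := by
        have h1 : Real.sqrt (4 - t^2) ≤ Real.sqrt 4 := Real.sqrt_le_sqrt (by nlinarith)
        have h2 : Real.sqrt 4 = 2 := by
          rw [show (4:ℝ) = 2^2 by norm_num, Real.sqrt_sq (by norm_num)]
        linarith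
      have habs : ‖F k t‖ = |l*t|^k / (Nat.factorial k : ℝ) * Real.sqrt (4 - t ^ 2) := by
        rw [hF, Real.norm_eq_abs, abs_mul, abs_div, abs_pow, Nat.abs_cast,
          abs_of_nonneg (Real.sqrt_nonneg _)]
      rw [habs]
      have hlt : |l*t| ≤ 2*|l| := by
        rw [abs_mul, mul_comm]
        exact mul_le_mul_of_nonneg_right ht2 (abs_nonneg l)
      gcongr
    calc (∫ t in Set.Ioc (-2:ℝ) 2, ‖F k t‖)
        ≤ ∫ _ in Set.Ioc (-2:ℝ) 2, (2*|l|)^k / (Nat.factorial k : ℝ) * 2 :=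
          setIntegral_mono_on (hF_int k).norm
            (continuous_const.integrableOn_Ioc) measurableSet_Ioc hle
      _ = 8 * ((2*|l|)^k / (Nat.factorial k : ℝ)) := by
          rw [setIntegral_const, measureReal_def, Real.volume_Ioc]
          rw [show (2:ℝ) - (-2) = 4 by norm_num, ENNReal.toReal_ofReal (by norm_num),
            smul_eq_mul]
          ring
  have hF_sum : Summable fun k => ∫ t in Set.Ioc (-2:ℝ) 2, ‖F k t‖ :=
    Summable.of_nonneg_of_le (fun k => integral_nonneg fun t => norm_nonneg _) hbound
      ((Real.summable_pow_div_factorial (2*|l|)).mul_left 8)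
  have hsum := MeasureTheory.hasSum_integral_of_summable_integral_norm hF_int hF_sum
  have htsum : ∀ t : ℝ, (∑' k, F k t) = Real.exp (l*t) * Real.sqrt (4 - t^2) := by
    intro t
    rw [hF]
    rw [tsum_mul_right]
    congr 1
    rw [Real.exp_eq_exp_ℝ]
    exact (NormedSpace.expSeries_div_hasSum_exp (l*t)).tsum_eq
  simp only [htsum] at hsum
  have hval : ∀ k, (∫ t in Set.Ioc (-2:ℝ) 2, F k t) =
      l^k / (Nat.factorial k : ℝ) * ∫ t in (-2:ℝ)..2, t^k * Real.sqrt (4 - t^2) := by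
    intro k
    rw [← intervalIntegral.integral_const_mul,
      intervalIntegral.integral_of_le (by norm_num : (-2:ℝ) ≤ 2)]
    congr 1
    ext t
    show (l*t)^k / (Nat.factorial k : ℝ) * Real.sqrt (4 - t^2)
      = l^k / (Nat.factorial k : ℝ) * (t^k * Real.sqrt (4 - t^2))
    rw [mul_pow]
    ring
  set g : ℕ → ℝ := fun k => l^k / (Nat.factorial k : ℝ) *
      ∫ t in (-2:ℝ)..2, t^k * Real.sqrt (4 - t^2) with hg
  simp only [hval] at hsum
  -- hsum : HasSum g (∫ t in Ioc, exp (l t) * sqrt (4 - t^2))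
  have hsummable : Summable g := hsum.summable
  have he : Summable (fun n => g (2*n)) :=
    hsummable.comp_injective (fun a b hab => by omega)
  have ho : Summable (fun n => g (2*n+1)) :=
    hsummable.comp_injective (fun a b hab => by omega)
  have hkey := tsum_even_add_odd he ho
  have hodd0 : ∀ n, g (2*n+1) = 0 := by
    intro n
    rw [hg]
    simp only
    rw [moment_odd, mul_zero]
  have hoddsum : (∑' n, g (2*n+1)) = 0 := by
    rw [tsum_congr hodd0, tsum_zero]
  have heven : ∀ n, g (2*n) = (2*π) *
      (l ^ (2 * n) / ((Nat.factorial (n + 1) : ℝ) * (Nat.factorial n : ℝ))) := by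
    intro n
    rw [hg]
    simp only
    rw [moment_even]
    have hk : ((2*n).factorial : ℝ) ≠ 0 := Nat.cast_ne_zero.2 (Nat.factorial_ne_zero _)
    have hk1 : ((n).factorial : ℝ) ≠ 0 := Nat.cast_ne_zero.2 (Nat.factorial_ne_zero _)
    have hk2 : ((n+1).factorial : ℝ) ≠ 0 := Nat.cast_ne_zero.2 (Nat.factorial_ne_zero _)
    field_simp
  have hevensum : (∑' n, g (2*n)) = (2*π) *
      ∑' n : ℕ, l ^ (2 * n) / ((Nat.factorial (n + 1) : ℝ) * (Nat.factorial n : ℝ)) := by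
    rw [tsum_congr heven, tsum_mul_left]
  rw [hevensum, hoddsum, add_zero, hsum.tsum_eq] at hkey
  rw [intervalIntegral.integral_of_le (by norm_num : (-2:ℝ) ≤ 2)]
  rw [show (fun t => Real.exp (l*t) * Real.sqrt (4 - t^2)) = fun t => Real.exp (l*t) * Real.sqrt (4 - t^2) from rfl] at hkey
  rw [← hkey]
  have hpi : (2*π) ≠ 0 := by positivity
  field_simp
end

section
/- (Estimate for the logarithmic moment generating function of a Gaussian–semicircular mixture.) Let θ ∈ (0,1) and define, for λ ∈ ℝ, Λ_θ(λ) := log( (1−θ)·e^{λ²/2} + θ·(1/(2π))·∫_{−2}^{2} e^{λt}·√(4 − t²) dt ). Then for every λ ≥ 0: | Λ_θ(λ) − λ²/2 − log(1−θ) | ≤ (θ/(1−θ)) · e^{2λ − λ²/2}. In particular, lim_{λ→∞} ( Λ_θ(λ) − λ²/2 ) = log(1−θ). -/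
open Real Filter

lemma semicircle_int : ∫ t in (-2:ℝ)..2, Real.sqrt (4 - t ^ 2) = 2 * π := by
  have h : ∫ u in (-1:ℝ)..1, Real.sqrt (4 - (2*u) ^ 2)
      = (2:ℝ)⁻¹ • ∫ t in (2*(-1):ℝ)..(2*1), Real.sqrt (4 - t ^ 2) :=
    intervalIntegral.integral_comp_mul_left (fun t => Real.sqrt (4 - t ^ 2)) two_ne_zero
  simp only [smul_eq_mul] at h
  have h2 : ∫ u in (-1:ℝ)..1, Real.sqrt (4 - (2*u) ^ 2) = 2 * (π/2) := by
    have : ∀ u : ℝ, Real.sqrt (4 - (2*u) ^ 2) = 2 * Real.sqrt (1 - u ^ 2) := by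
      intro u
      rw [show (4:ℝ) - (2*u)^2 = 4 * (1 - u^2) by ring, show (4:ℝ) = 2^2 by norm_num,
        Real.sqrt_mul (by positivity), Real.sqrt_sq (by norm_num)]
    simp only [this]
    rw [intervalIntegral.integral_const_mul, integral_sqrt_one_sub_sq]
  rw [h2] at h
  norm_num at h
  linarith

/-- The logarithmic moment generating function of the mixture
`(1−θ)·(standard Gaussian) + θ·(semicircle law of radius 2)`. -/
noncomputable def mixtureLogMGF (θ l : ℝ) : ℝ :=
  Real.log ((1 - θ) * Real.exp (l ^ 2 / 2) +
    θ * ((1 / (2 * π)) * ∫ t in (-2 : ℝ)..2, Real.exp (l * t) * Real.sqrt (4 - t ^ 2)))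

/-- **Estimate for the logarithmic moment generating function of a Gaussian–semicircular
mixture.** -/
theorem mixture_logMGF_estimate (θ : ℝ) (hθ : θ ∈ Set.Ioo (0 : ℝ) 1) :
    (∀ l : ℝ, 0 ≤ l →
      |mixtureLogMGF θ l - l ^ 2 / 2 - Real.log (1 - θ)| ≤
        θ / (1 - θ) * Real.exp (2 * l - l ^ 2 / 2)) ∧
    Tendsto (fun l : ℝ => mixtureLogMGF θ l - l ^ 2 / 2) atTop (nhds (Real.log (1 - θ))) := by
  obtain ⟨hθ0, hθ1⟩ := hθ
  have h1θ : 0 < 1 - θ := by linarith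
  have key : ∀ l : ℝ, 0 ≤ l →
      0 ≤ mixtureLogMGF θ l - l ^ 2 / 2 - Real.log (1 - θ) ∧
      mixtureLogMGF θ l - l ^ 2 / 2 - Real.log (1 - θ) ≤
        θ / (1 - θ) * Real.exp (2 * l - l ^ 2 / 2) := by
    intro l hl
    set J := ∫ t in (-2:ℝ)..2, Real.exp (l * t) * Real.sqrt (4 - t ^ 2) with hJdef
    have hcont : Continuous fun t : ℝ => Real.exp (l * t) * Real.sqrt (4 - t ^ 2) := by
      fun_prop
    have hJnn : 0 ≤ J :=
      intervalIntegral.integral_nonneg (by norm_num)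
        (fun t _ => mul_nonneg (Real.exp_pos _).le (Real.sqrt_nonneg _))
    have hJle : J ≤ Real.exp (2 * l) * (2 * π) := by
      calc J ≤ ∫ t in (-2:ℝ)..2, Real.exp (2 * l) * Real.sqrt (4 - t ^ 2) := by
              apply intervalIntegral.integral_mono_on (by norm_num)
                (hcont.intervalIntegrable _ _)
                ((by fun_prop : Continuous fun t : ℝ =>
                  Real.exp (2 * l) * Real.sqrt (4 - t ^ 2)).intervalIntegrable _ _)
              intro t ht
              apply mul_le_mul_of_nonneg_right _ (Real.sqrt_nonneg _)
              exact Real.exp_le_exp.2 (by nlinarith [ht.1, ht.2])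
        _ = Real.exp (2 * l) * (2 * π) := by
              rw [intervalIntegral.integral_const_mul, semicircle_int]
    set A := (1 - θ) * Real.exp (l ^ 2 / 2) with hAdef
    set B := θ * ((1 / (2 * π)) * J) with hBdef
    have hA : 0 < A := mul_pos h1θ (Real.exp_pos _)
    have hπ : (0:ℝ) < 2 * π := by positivity
    have hBnn : 0 ≤ B := mul_nonneg hθ0.le (mul_nonneg (by positivity) hJnn)
    have hBle : B ≤ θ * Real.exp (2 * l) := by
      have h2 : (1 / (2 * π)) * J ≤ Real.exp (2 * l) := by
        rw [div_mul_eq_mul_div, one_mul, div_le_iff₀ hπ]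
        linarith
      exact mul_le_mul_of_nonneg_left h2 hθ0.le
    have hlogA : Real.log A = Real.log (1 - θ) + l ^ 2 / 2 := by
      rw [hAdef, Real.log_mul h1θ.ne' (Real.exp_pos _).ne', Real.log_exp]
    have heq : mixtureLogMGF θ l = Real.log (A + B) := by
      rw [mixtureLogMGF, hAdef, hBdef, hJdef]
    rw [show mixtureLogMGF θ l - l ^ 2 / 2 - Real.log (1 - θ)
        = Real.log (A + B) - Real.log A by rw [heq, hlogA]; ring]
    constructor
    · exact sub_nonneg.2 (Real.log_le_log hA (by linarith))
    · have hABpos : 0 < A + B := by linarith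
      rw [← Real.log_div hABpos.ne' hA.ne']
      have h1 : Real.log ((A + B) / A) ≤ (A + B) / A - 1 :=
        Real.log_le_sub_one_of_pos (by positivity)
      have h2 : (A + B) / A - 1 = B / A := by field_simp; ring
      have h3 : B / A ≤ θ / (1 - θ) * Real.exp (2 * l - l ^ 2 / 2) := by
        rw [Real.exp_sub, div_le_iff₀ hA, hAdef]
        have : θ / (1 - θ) * (Real.exp (2 * l) / Real.exp (l ^ 2 / 2)) *
            ((1 - θ) * Real.exp (l ^ 2 / 2)) = θ * Real.exp (2 * l) := by
          field_simp
        rw [this]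
        exact hBle
      linarith
  constructor
  · intro l hl
    obtain ⟨h0, h1⟩ := key l hl
    rw [abs_of_nonneg h0]; exact h1
  · have htend : Tendsto (fun l : ℝ => θ / (1 - θ) * Real.exp (2 * l - l ^ 2 / 2))
        atTop (nhds 0) := by
      rw [show (0:ℝ) = θ / (1 - θ) * 0 by ring]
      apply Tendsto.const_mul
      apply Real.tendsto_exp_atBot.comp
      have : Tendsto (fun l : ℝ => l * (l - 4)) atTop atTop :=
        tendsto_id.atTop_mul_atTop₀ (tendsto_atTop_add_const_right _ _ tendsto_id)
      have h2 : Tendsto (fun l : ℝ => -(l * (l - 4)) / 2) atTop atBot :=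
        (tendsto_neg_atBot_iff.2 this).atBot_div_const (by norm_num)
      convert h2 using 2 with l; ring
    have h0 : Tendsto (fun l : ℝ => mixtureLogMGF θ l - l ^ 2 / 2 - Real.log (1 - θ))
        atTop (nhds 0) := by
      apply squeeze_zero' (eventually_atTop.2 ⟨0, fun l hl => (key l hl).1⟩)
        (eventually_atTop.2 ⟨0, fun l hl => (key l hl).2⟩) htend
    have := h0.add_const (Real.log (1 - θ))
    simpa using this
end

section
/- (Optimality of the order p in the Rosenthal inequality via random selectors, explicit form.) Fix a real number C ≥ 1 and set a := (7/8)³/(32C)⁴. Let p be a positive integer with 2^{−p} < a, set k := a·p, and let δ_1, …, δ_p be independent {0,1}-valued random variables with P(δ_i = 1) = a. If F ∈ ℝ satisfies ( E[ |(1/k)·Σ_{i=1}^p δ_i − 1|^p ] )^{1/p} ≤ C·√(p/k) + F/k, then F ≥ ( (7/8)^{3/2} / 1024 ) · (p/C). -/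
open MeasureTheory ProbabilityTheory Real

set_option maxHeartbeats 1000000 in
/-- **Optimality of the order `p` in the Rosenthal inequality via random selectors,
explicit form.** -/
theorem rosenthal_p_optimal_selectors
    {Ω : Type} [MeasurableSpace Ω] (μ : Measure Ω) [IsProbabilityMeasure μ]
    (C : ℝ) (hC : 1 ≤ C)
    (a : ℝ) (ha : a = (7 / 8 : ℝ) ^ 3 / (32 * C) ^ 4)
    (p : ℕ) (hp : 0 < p) (hpa : ((2 : ℝ) ^ p)⁻¹ < a)
    (k : ℝ) (hk : k = a * p)
    (δ : Fin p → Ω → ℝ)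
    (hmeas : ∀ i, Measurable (δ i))
    (h01 : ∀ i ω, δ i ω = 0 ∨ δ i ω = 1)
    (hindep : iIndepFun δ μ)
    (hbern : ∀ i, μ {ω | δ i ω = 1} = ENNReal.ofReal a)
    (F : ℝ)
    (hF : (∫ ω, |k⁻¹ * ∑ i, δ i ω - 1| ^ (p : ℝ) ∂μ) ^ (1 / (p : ℝ)) ≤
      C * Real.sqrt (p / k) + F / k) :
    ((7 / 8 : ℝ) ^ ((3 : ℝ) / 2) / 1024) * (p / C) ≤ F := by
  have hC0 : (0:ℝ) < C := lt_of_lt_of_le one_pos hC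
  have hp' : (0:ℝ) < (p:ℝ) := by exact_mod_cast hp
  set s : ℝ := (7/8 : ℝ) ^ ((3:ℝ)/4) with hs
  have hs0 : 0 < s := Real.rpow_pos_of_pos (by norm_num) _
  have hs4 : s ^ (4:ℕ) = (7/8:ℝ) ^ (3:ℕ) := by
    rw [hs, ← Real.rpow_natCast ((7/8:ℝ) ^ ((3:ℝ)/4)) 4, ← Real.rpow_mul (by norm_num)]
    norm_num
  have hs1 : s ≤ 1 := Real.rpow_le_one (by norm_num) (by norm_num) (by norm_num)
  have hs9 : (0.9:ℝ) ≤ s := by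
    have h4 : (0.9:ℝ) ^ (4:ℕ) ≤ s ^ (4:ℕ) := by rw [hs4]; norm_num
    exact le_of_pow_le_pow_left₀ (by norm_num) hs0.le h4
  set t : ℝ := s / (32 * C) with ht
  have ht0 : 0 < t := div_pos hs0 (by positivity)
  have ht4 : t ^ (4:ℕ) = a := by
    rw [ha, ht, div_pow, hs4]
  have ha0 : 0 < a := by rw [← ht4]; positivity
  have ha1 : a ≤ (1/32:ℝ)^(4:ℕ) := by
    rw [← ht4, ht]
    apply pow_le_pow_left₀ ht0.le
    rw [div_le_div_iff₀ (by positivity) (by norm_num)]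
    nlinarith
  have hk0 : 0 < k := by rw [hk]; positivity
  -- the index set of the first m coordinates
  set m : ℕ := (p + 3) / 4 with hm
  have hmp : m ≤ p := by omega
  have h4m : p ≤ 4 * m := by omega
  have h4m' : 4 * m ≤ p + 3 := by omega
  set S : Finset (Fin p) := Finset.univ.map (Fin.castLEEmb hmp) with hS
  have hcard : S.card = m := by simp [hS]
  set A : Set Ω := ⋂ i ∈ S, δ i ⁻¹' {1} with hA
  have hAmeas : MeasurableSet A := by
    apply MeasurableSet.biInter (Set.to_countable _)
    exact fun i _ => (hmeas i) (measurableSet_singleton 1)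
  have hmuA : (μ A).toReal = a ^ m := by
    have h1 : μ A = ∏ i ∈ S, μ (δ i ⁻¹' {1}) := by
      refine hindep.meas_biInter (fun i _ => ⟨{1}, measurableSet_singleton 1, rfl⟩)
    have h2 : ∀ i : Fin p, μ (δ i ⁻¹' {1}) = ENNReal.ofReal a := by
      intro i
      have : δ i ⁻¹' {1} = {ω | δ i ω = 1} := rfl
      rw [this, hbern i]
    rw [h1, Finset.prod_congr rfl (fun i _ => h2 i), Finset.prod_const, hcard,
      ENNReal.toReal_pow, ENNReal.toReal_ofReal ha0.le]
  set c : ℝ := (m:ℝ)/k - 1 with hc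
  have hmk : 1/(4*a) ≤ (m:ℝ)/k := by
    rw [hk]
    rw [div_le_div_iff₀ (by positivity) (by positivity)]
    have : (p:ℝ) ≤ 4 * m := by exact_mod_cast h4m
    nlinarith
  have hc0 : 0 < c := by
    have : (8:ℝ) ≤ 1/(4*a) := by
      rw [le_div_iff₀ (by positivity)]
      nlinarith
    simp only [hc]
    linarith [hmk]
  -- pointwise sum bounds
  have hδ0 : ∀ i ω, 0 ≤ δ i ω := by
    intro i ω; rcases h01 i ω with h | h <;> rw [h] <;> norm_num
  have hδ1 : ∀ i ω, δ i ω ≤ 1 := by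
    intro i ω; rcases h01 i ω with h | h <;> rw [h] <;> norm_num
  have hsum_lb : ∀ ω ∈ A, (m:ℝ) ≤ ∑ i, δ i ω := by
    intro ω hω
    have hmem : ∀ i ∈ S, δ i ω = 1 := by
      intro i hi
      simpa using Set.mem_iInter₂.mp hω i hi
    calc (m:ℝ) = ∑ i ∈ S, δ i ω := by
          rw [Finset.sum_congr rfl hmem, Finset.sum_const, hcard]; simp
      _ ≤ ∑ i, δ i ω :=
          Finset.sum_le_sum_of_subset_of_nonneg (Finset.subset_univ S)
            (fun i _ _ => hδ0 i ω)
  have hsum_ub : ∀ ω, ∑ i, δ i ω ≤ (p:ℝ) := by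
    intro ω
    calc ∑ i, δ i ω ≤ ∑ _i : Fin p, (1:ℝ) := Finset.sum_le_sum (fun i _ => hδ1 i ω)
      _ = (p:ℝ) := by simp
  have hsum0 : ∀ ω, (0:ℝ) ≤ ∑ i, δ i ω := fun ω => Finset.sum_nonneg fun i _ => hδ0 i ω
  -- the integrand, in natural power form
  simp only [Real.rpow_natCast] at hF
  set f : Ω → ℝ := fun ω => |k⁻¹ * ∑ i, δ i ω - 1| ^ p with hf
  have hfm : Measurable f := by
    apply Measurable.pow_const
    apply Measurable.abs
    exact (measurable_const.mul (Finset.measurable_sum _ fun i _ => hmeas i)).sub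
      measurable_const
  have hfint : Integrable f μ := by
    refine (integrable_const ((k⁻¹ * p + 1) ^ p)).mono' hfm.aestronglyMeasurable ?_
    refine Filter.Eventually.of_forall fun ω => ?_
    have hnn : 0 ≤ k⁻¹ * ∑ i, δ i ω :=
      mul_nonneg (inv_nonneg.mpr hk0.le) (hsum0 ω)
    have hub : k⁻¹ * ∑ i, δ i ω ≤ k⁻¹ * p :=
      mul_le_mul_of_nonneg_left (hsum_ub ω) (inv_nonneg.mpr hk0.le)
    have hpk : (0:ℝ) ≤ k⁻¹ * p := by positivity
    have h1 : |k⁻¹ * ∑ i, δ i ω - 1| ≤ k⁻¹ * p + 1 := by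
      rw [abs_le]
      constructor
      · linarith
      · linarith
    show ‖|k⁻¹ * ∑ i, δ i ω - 1| ^ p‖ ≤ (k⁻¹ * (p:ℝ) + 1) ^ p
    rw [Real.norm_eq_abs, abs_pow, abs_abs]
    exact pow_le_pow_left₀ (abs_nonneg _) h1 p
  -- lower bound for the integral
  have hkey : c ^ p * a ^ m ≤ ∫ ω, f ω ∂μ := by
    have hgle : ∀ ω, A.indicator (fun _ => c ^ p) ω ≤ f ω := by
      intro ω
      by_cases hω : ω ∈ A
      · rw [Set.indicator_of_mem hω, hf]
        have h1 : c ≤ k⁻¹ * ∑ i, δ i ω - 1 := by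
          rw [hc]
          have := hsum_lb ω hω
          have h2 : (m:ℝ)/k ≤ k⁻¹ * ∑ i, δ i ω := by
            rw [div_eq_inv_mul]
            exact mul_le_mul_of_nonneg_left this (inv_nonneg.mpr hk0.le)
          linarith
        have h2 : c ≤ |k⁻¹ * ∑ i, δ i ω - 1| := le_trans h1 (le_abs_self _)
        exact pow_le_pow_left₀ hc0.le h2 p
      · rw [Set.indicator_of_notMem hω]
        positivity
    calc c ^ p * a ^ m = ∫ ω, A.indicator (fun _ => c ^ p) ω ∂μ := by
          rw [integral_indicator_const _ hAmeas, measureReal_def, hmuA, smul_eq_mul, mul_comm]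
      _ ≤ ∫ ω, f ω ∂μ := integral_mono (by
            exact (integrable_const (c^p)).indicator hAmeas) hfint hgle
  -- take p-th roots
  set X : ℝ := c * a ^ ((m:ℝ)/(p:ℝ)) with hX
  have hX0 : 0 < X := mul_pos hc0 (Real.rpow_pos_of_pos ha0 _)
  have hXp : X ^ (p:ℕ) = c ^ p * a ^ m := by
    rw [hX, mul_pow, ← Real.rpow_natCast (a ^ ((m:ℝ)/(p:ℝ))) p,
      ← Real.rpow_mul ha0.le, div_mul_cancel₀ _ (ne_of_gt hp'), Real.rpow_natCast]
  have hXle : X ≤ (∫ ω, f ω ∂μ) ^ (1/(p:ℝ)) := by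
    have h1 : (X ^ (p:ℕ) : ℝ) ^ (1/(p:ℝ)) ≤ (∫ ω, f ω ∂μ) ^ (1/(p:ℝ)) := by
      apply Real.rpow_le_rpow (by positivity) (hXp ▸ hkey) (by positivity)
    rwa [← Real.rpow_natCast X p, ← Real.rpow_mul hX0.le,
      mul_one_div_cancel (ne_of_gt hp'), Real.rpow_one] at h1
  have hXF : X ≤ C * Real.sqrt (p / k) + F / k := le_trans hXle hF
  -- lower bound X
  have hamp : a ^ ((1:ℝ)/4) * (1/2) ≤ a ^ ((m:ℝ)/(p:ℝ)) := by
    have he : (m:ℝ)/(p:ℝ) - 1/4 ≤ 1/(p:ℝ) := by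
      have h4 : (m:ℝ) ≤ (p:ℝ)/4 + 1 := by
        have h4' : (4:ℝ) * m ≤ (p:ℝ) + 3 := by exact_mod_cast h4m'
        linarith
      calc (m:ℝ)/(p:ℝ) - 1/4 ≤ ((p:ℝ)/4 + 1)/(p:ℝ) - 1/4 := by gcongr
        _ = 1/(p:ℝ) := by field_simp; ring
    have ha1' : a ≤ 1 := le_trans ha1 (by norm_num)
    have h2 : a ^ ((1:ℝ)/(p:ℝ)) ≤ a ^ ((m:ℝ)/(p:ℝ) - 1/4) :=
      Real.rpow_le_rpow_of_exponent_ge ha0 ha1' he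
    have h3 : (1/2:ℝ) ≤ a ^ ((1:ℝ)/(p:ℝ)) := by
      have h4 : ((1/2:ℝ) ^ (p:ℕ)) ^ ((1:ℝ)/(p:ℝ)) ≤ a ^ ((1:ℝ)/(p:ℝ)) := by
        apply Real.rpow_le_rpow (by positivity) ?_ (by positivity)
        rw [one_div, inv_pow]
        exact hpa.le
      rwa [← Real.rpow_natCast (1/2:ℝ) p, ← Real.rpow_mul (by norm_num),
        mul_one_div_cancel (ne_of_gt hp'), Real.rpow_one] at h4
    calc a ^ ((1:ℝ)/4) * (1/2) ≤ a ^ ((1:ℝ)/4) * a ^ ((m:ℝ)/(p:ℝ) - 1/4) := by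
          apply mul_le_mul_of_nonneg_left (le_trans h3 h2) (by positivity)
      _ = a ^ ((m:ℝ)/(p:ℝ)) := by
          rw [← Real.rpow_add ha0]; ring_nf
  have hct : a ^ ((1:ℝ)/4) = t := by
    rw [← ht4, ← Real.rpow_natCast t 4, ← Real.rpow_mul ht0.le]
    norm_num
  have hXlb : (1/(4*a) - 1) * (t * (1/2)) ≤ X := by
    rw [hX]
    have h1 : (1/(4*a) - 1) ≤ c := by rw [hc]; linarith [hmk]
    have h2 : t * (1/2) ≤ a ^ ((m:ℝ)/(p:ℝ)) := by rw [← hct]; exact hamp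
    have hpos : 0 ≤ (1/(4*a) - 1) := by
      have : (8:ℝ) ≤ 1/(4*a) := by rw [le_div_iff₀ (by positivity)]; nlinarith
      linarith
    exact mul_le_mul h1 h2 (by positivity) hc0.le
  -- compute the sqrt term
  have hsqrt : Real.sqrt ((p:ℝ) / k) = 1 / t^2 := by
    have h1 : (p:ℝ)/k = (1/t^2)^2 := by
      rw [hk, ← ht4]
      field_simp
    rw [h1, Real.sqrt_sq (by positivity)]
  rw [hsqrt] at hXF
  -- final algebra
  have hfinal : (1/(4*a) - 1) * (t * (1/2)) ≤ C * (1/t^2) + F / k := le_trans hXlb hXF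
  have hFlb : (p:ℝ) * (t/8 - t^5/2 - C * t^2) ≤ F := by
    have hka : k = t^4 * p := by rw [hk, ← ht4]
    have h2 : (1/(4*a) - 1) * (t*(1/2)) * k ≤ (C*(1/t^2) + F/k) * k :=
      mul_le_mul_of_nonneg_right hfinal hk0.le
    have e1 : (1/(4*a) - 1) * (t*(1/2)) * k = (p:ℝ)*(t/8 - t^5/2) := by
      rw [hka, ← ht4]; field_simp; ring
    have e2 : (C*(1/t^2) + F/k) * k = C*t^2*(p:ℝ) + F := by
      rw [hka]; field_simp
    rw [e1, e2] at h2
    have e3 : (p:ℝ)*(t/8 - t^5/2 - C*t^2) = (p:ℝ)*(t/8 - t^5/2) - C*t^2*(p:ℝ) := by ring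
    linarith
  have hgoal : ((7/8:ℝ) ^ ((3:ℝ)/2) / 1024) * (p / C) ≤ (p:ℝ) * (t/8 - t^5/2 - C * t^2) := by
    have hsg : (7/8:ℝ) ^ ((3:ℝ)/2) = s^2 := by
      rw [hs, ← Real.rpow_natCast ((7/8:ℝ) ^ ((3:ℝ)/4)) 2, ← Real.rpow_mul (by norm_num)]
      norm_num
    rw [hsg, ht]
    have hC4 : (1:ℝ) ≤ C^4 := by simpa using pow_le_pow_left₀ zero_le_one hC 4
    have hs5 : s^5 ≤ 1 := pow_le_one₀ hs0.le hs1
    have e : s/(32*C)/8 - (s/(32*C))^5/2 - C*(s/(32*C))^2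
        = (s/256 - s^5/(2*32^5*C^4) - s^2/1024)/C := by
      field_simp
      ring
    rw [e]
    have h5 : s^5/(2*32^5*C^4) ≤ 1/(2*32^5) := by
      apply div_le_div₀ (by norm_num) hs5 (by norm_num)
      nlinarith
    have hkey : s^2/1024 ≤ s/256 - s^5/(2*32^5*C^4) - s^2/1024 := by
      nlinarith
    calc s^2/1024 * ((p:ℝ)/C) = ((p:ℝ)/C) * (s^2/1024) := by ring
      _ ≤ ((p:ℝ)/C) * (s/256 - s^5/(2*32^5*C^4) - s^2/1024) := by
          apply mul_le_mul_of_nonneg_left hkey (by positivity)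
      _ = (p:ℝ) * ((s/256 - s^5/(2*32^5*C^4) - s^2/1024)/C) := by ring
  linarith
end

section
/- (Refined optimality of the order p in the Rosenthal inequality: logarithmic improvement in the Gaussian constant.) There exists an absolute constant c₁ > 0 such that the following holds. Let C ≥ 1.5 be a real number and let f : ℕ → ℝ be a function with the property that for every positive integer p and every real number k with 0 < k ≤ p, if δ_1, …, δ_p are independent {0,1}-valued random variables with P(δ_i = 1) = k/p, then ( E[ |(1/k)·Σ_{i=1}^p δ_i − 1|^p ] )^{1/p} ≤ C·√(p/k) + f(p)/k. Then for all sufficiently large p one has f(p) ≥ p / (c₁·log C). -/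
open MeasureTheory ProbabilityTheory Real Filter

lemma pi_inter_eval {p : ℕ} (ν : Measure Bool) [IsProbabilityMeasure ν]
    (S : Finset (Fin p)) (T : Fin p → Set Bool) :
    Measure.pi (fun _ : Fin p => ν) (⋂ i ∈ S, (fun ω : Fin p → Bool => ω i) ⁻¹' T i)
      = ∏ i ∈ S, ν (T i) := by
  classical
  have h1 : (⋂ i ∈ S, (fun ω : Fin p → Bool => ω i) ⁻¹' T i)
      = Set.pi Set.univ (fun i => if i ∈ S then T i else Set.univ) := by
    ext ω
    simp only [Set.mem_iInter, Set.mem_preimage, Set.mem_pi, Set.mem_univ, true_implies]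
    constructor
    · intro h i; split_ifs with hi
      · exact h i hi
      · trivial
    · intro h i hi; have := h i; rwa [if_pos hi] at this
  rw [h1, Measure.pi_pi]
  have h2 : ∀ i, ν (if i ∈ S then T i else Set.univ) = if i ∈ S then ν (T i) else 1 := by
    intro i; split_ifs with hi
    · rfl
    · exact measure_univ
  simp_rw [h2]
  rw [Finset.prod_ite_mem Finset.univ S (fun i => ν (T i)), Finset.univ_inter]

lemma pi_eval_meas {p : ℕ} (ν : Measure Bool) [IsProbabilityMeasure ν]
    (i : Fin p) (T : Set Bool) :
    Measure.pi (fun _ : Fin p => ν) ((fun ω : Fin p → Bool => ω i) ⁻¹' T) = ν T := by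
  have := pi_inter_eval ν {i} (fun _ => T)
  simpa using this

lemma pi_eval_indep {p : ℕ} (ν : Measure Bool) [IsProbabilityMeasure ν] (g : Bool → ℝ) :
    iIndepFun (fun (i : Fin p) (ω : Fin p → Bool) => g (ω i))
      (Measure.pi (fun _ : Fin p => ν)) := by
  rw [iIndepFun_iff_measure_inter_preimage_eq_mul]
  intro S sets _
  have h1 : ∀ i : Fin p, (fun ω : Fin p → Bool => g (ω i)) ⁻¹' sets i
      = (fun ω : Fin p → Bool => ω i) ⁻¹' (g ⁻¹' sets i) := fun i => rfl
  simp_rw [h1, pi_inter_eval ν S (fun i => g ⁻¹' sets i), pi_eval_meas ν]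

lemma bernoulli_true (r : NNReal) (hr : r ≤ 1) :
    (PMF.bernoulli r hr).toMeasure {true} = r := by
  rw [PMF.toMeasure_apply_singleton _ _ (measurableSet_singleton true)]
  rfl

lemma card_filter_fin_lt {p m : ℕ} (hmp : m ≤ p) :
    (Finset.univ.filter (fun i : Fin p => (i : ℕ) < m)).card = m := by
  classical
  have h : Finset.univ.filter (fun i : Fin p => (i : ℕ) < m)
      = (Finset.range m).attachFin (fun x hx => lt_of_lt_of_le (Finset.mem_range.mp hx) hmp) := by
    ext i
    simp [Finset.mem_attachFin]
  rw [h, Finset.card_attachFin, Finset.card_range]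

lemma meas_A {p m : ℕ} (hmp : m ≤ p) (ν : Measure Bool) [IsProbabilityMeasure ν] :
    Measure.pi (fun _ : Fin p => ν) {ω : Fin p → Bool | ∀ i : Fin p, (i : ℕ) < m → ω i = true}
      = (ν {true}) ^ m := by
  classical
  have hset : {ω : Fin p → Bool | ∀ i : Fin p, (i : ℕ) < m → ω i = true}
      = ⋂ i ∈ Finset.univ.filter (fun i : Fin p => (i : ℕ) < m),
          (fun ω : Fin p → Bool => ω i) ⁻¹' ({true} : Set Bool) := by
    ext ω
    simp [Set.mem_iInter]
  rw [hset, pi_inter_eval ν _ _, Finset.prod_const, card_filter_fin_lt hmp]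

lemma log_le_div_e {x : ℝ} (hx : 0 < x) : Real.log x ≤ x / Real.exp 1 := by
  have h1 : Real.log (x / Real.exp 1) ≤ x / Real.exp 1 - 1 :=
    Real.log_le_sub_one_of_pos (div_pos hx (Real.exp_pos 1))
  rw [Real.log_div hx.ne' (Real.exp_pos 1).ne', Real.log_exp] at h1
  linarith

lemma log_onehalf : (0.4:ℝ) ≤ Real.log 1.5 := by
  rw [Real.le_log_iff_exp_le (by norm_num)]
  have h1 : Real.exp 0.4 ^ (5:ℕ) = Real.exp 2 := by
    rw [← Real.exp_nat_mul]; norm_num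
  have h2 : Real.exp 2 = Real.exp 1 ^ (2:ℕ) := by
    rw [← Real.exp_nat_mul]; norm_num
  have h3 := Real.exp_one_lt_d9
  have h4 : Real.exp 0.4 ^ (5:ℕ) ≤ (1.5:ℝ) ^ (5:ℕ) := by
    rw [h1, h2]; nlinarith [Real.exp_pos 1]
  exact le_of_pow_le_pow_left₀ (by norm_num) (by norm_num) h4

lemma exp7_ge : (1096:ℝ) ≤ Real.exp 7 := by
  have h2 : Real.exp 7 = Real.exp 1 ^ (7:ℕ) := by
    rw [← Real.exp_nat_mul]; norm_num
  have h3 := Real.exp_one_gt_d9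
  have h4 : (2.7182818283:ℝ) ^ (7:ℕ) ≤ Real.exp 1 ^ (7:ℕ) :=
    pow_le_pow_left₀ (by norm_num) h3.le 7
  calc (1096:ℝ) ≤ 2.7182818283 ^ (7:ℕ) := by norm_num
    _ ≤ Real.exp 1 ^ (7:ℕ) := h4
    _ = Real.exp 7 := h2.symm


lemma numeric_final {a b u : ℝ} (h40 : a ≤ 0.0004) (h19 : b ≤ 0.0004)
    (ha : 0 < a) (hu1 : 0.3678 ≤ u) :
    (1:ℝ)/200 ≤ (1/40 - a)*(0.95*u) - b := by nlinarith
set_option maxHeartbeats 1000000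

/-- **Refined optimality of the order `p` in the Rosenthal inequality: logarithmic improvement
in the Gaussian constant.** -/
theorem rosenthal_p_optimal_log_refinement :
    ∃ c₁ : ℝ, 0 < c₁ ∧
      ∀ C : ℝ, 1.5 ≤ C →
      ∀ f : ℕ → ℝ,
      (∀ p : ℕ, 0 < p → ∀ k : ℝ, 0 < k → k ≤ p →
        ∀ (Ω : Type) [MeasurableSpace Ω] (μ : Measure Ω), IsProbabilityMeasure μ →
        ∀ δ : Fin p → Ω → ℝ,
        (∀ i, Measurable (δ i)) →
        (∀ i ω, δ i ω = 0 ∨ δ i ω = 1) →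
        iIndepFun δ μ →
        (∀ i, μ {ω | δ i ω = 1} = ENNReal.ofReal (k / p)) →
        (∫ ω, |k⁻¹ * ∑ i, δ i ω - 1| ^ (p : ℝ) ∂μ) ^ (1 / (p : ℝ)) ≤
          C * Real.sqrt (p / k) + f p / k) →
      ∀ᶠ p : ℕ in atTop, (p : ℝ) / (c₁ * Real.log C) ≤ f p := by
  refine ⟨200, by norm_num, ?_⟩
  intro C hC f h
  set L := Real.log C with hLdef
  have hC0 : (0:ℝ) < C := lt_of_lt_of_le (by norm_num) hC
  have hL4 : (0.4:ℝ) ≤ L := le_trans log_onehalf (Real.log_le_log (by norm_num) hC)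
  have hL0 : (0:ℝ) < L := by linarith
  have hE1 : (2.7182818283:ℝ) < Real.exp 1 := Real.exp_one_gt_d9
  have hE2 : Real.exp 1 < 2.7182818286 := Real.exp_one_lt_d9
  have hE0 : (0:ℝ) < Real.exp 1 := Real.exp_pos 1
  have hEinv0 : (0:ℝ) < (Real.exp 1)⁻¹ := by positivity
  have hEcancel : Real.exp 1 * (Real.exp 1)⁻¹ = 1 := mul_inv_cancel₀ hE0.ne'
  have hinv : (Real.exp 1)⁻¹ ≤ 0.368 := by nlinarith
  have hinv2 : (0.3678:ℝ) ≤ (Real.exp 1)⁻¹ := by nlinarith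
  have hCe : C = Real.exp L := (Real.exp_log hC0).symm
  -- key scalar bounds
  have hLe : L * Real.exp (-L) ≤ (Real.exp 1)⁻¹ := by
    have h1 : L ≤ C / Real.exp 1 := log_le_div_e hC0
    rw [hCe] at h1
    rw [Real.exp_neg]
    rw [div_eq_mul_inv] at h1
    have h2 : (0:ℝ) < Real.exp L := Real.exp_pos L
    calc L * (Real.exp L)⁻¹ ≤ (Real.exp L * (Real.exp 1)⁻¹) * (Real.exp L)⁻¹ := by
          apply mul_le_mul_of_nonneg_right h1 (by positivity)
      _ = (Real.exp 1)⁻¹ * (Real.exp L * (Real.exp L)⁻¹) := by ring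
      _ = (Real.exp 1)⁻¹ := by rw [mul_inv_cancel₀ h2.ne', mul_one]
  have hexp7 : Real.exp (-(7:ℝ)) ≤ 1/1096 := by
    rw [Real.exp_neg]
    rw [inv_le_comm₀ (Real.exp_pos 7) (by norm_num)]
    simpa using exp7_ge
  have h19 : L * Real.exp (-(19*L)) ≤ 0.0004 := by
    have e1 : Real.exp (-(19*L)) = Real.exp (-L) * Real.exp (-(18*L)) := by
      rw [← Real.exp_add]; ring_nf
    have e2 : Real.exp (-(18*L)) ≤ Real.exp (-(7:ℝ)) :=
      Real.exp_le_exp.mpr (by linarith)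
    calc L * Real.exp (-(19*L)) = (L * Real.exp (-L)) * Real.exp (-(18*L)) := by
          rw [e1]; ring
      _ ≤ (Real.exp 1)⁻¹ * (1/1096) := by
          apply mul_le_mul hLe (le_trans e2 hexp7) (Real.exp_pos _).le (by positivity)
      _ ≤ 0.0004 := by nlinarith
  have h40 : L * Real.exp (-(40*L)) ≤ 0.0004 := by
    have e1 : Real.exp (-(40*L)) = Real.exp (-L) * Real.exp (-(39*L)) := by
      rw [← Real.exp_add]; ring_nf
    have e2 : Real.exp (-(39*L)) ≤ Real.exp (-(7:ℝ)) :=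
      Real.exp_le_exp.mpr (by linarith)
    calc L * Real.exp (-(40*L)) = (L * Real.exp (-L)) * Real.exp (-(39*L)) := by
          rw [e1]; ring
      _ ≤ (Real.exp 1)⁻¹ * (1/1096) := by
          apply mul_le_mul hLe (le_trans e2 hexp7) (Real.exp_pos _).le (by positivity)
      _ ≤ 0.0004 := by nlinarith
  rw [eventually_atTop]
  refine ⟨max 2 ⌈800*L⌉₊, ?_⟩
  intro p hp
  have hp2 : 2 ≤ p := le_trans (le_max_left _ _) hp
  have hp0 : 0 < p := by omega
  have hpR : (0:ℝ) < p := by exact_mod_cast hp0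
  have hpL : 800*L ≤ (p:ℝ) := by
    have h1 : ⌈800*L⌉₊ ≤ p := le_trans (le_max_right _ _) hp
    exact le_trans (Nat.le_ceil _) (by exact_mod_cast h1)
  -- parameters
  obtain ⟨ρ, hρdef⟩ : ∃ ρ : ℝ, ρ = Real.exp (-(40*L)) := ⟨_, rfl⟩
  have hρ0 : (0:ℝ) < ρ := hρdef ▸ Real.exp_pos _
  have hρ1 : ρ ≤ 1 := hρdef ▸ Real.exp_le_one_iff.mpr (by nlinarith)
  obtain ⟨k, hkdef⟩ : ∃ k : ℝ, k = p * ρ := ⟨_, rfl⟩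
  have hk0 : 0 < k := by rw [hkdef]; positivity
  have hkp : k ≤ p := by nlinarith
  obtain ⟨m, hmdef⟩ : ∃ m : ℕ, m = ⌈(p:ℝ)/(40*L)⌉₊ := ⟨_, rfl⟩
  have hm1 : (p:ℝ)/(40*L) ≤ m := hmdef ▸ Nat.le_ceil _
  have hm2 : (m:ℝ) ≤ (p:ℝ)/(40*L) + 1 := by
    rw [hmdef]; exact (Nat.ceil_lt_add_one (by positivity)).le
  have hdiv_pos : (0:ℝ) < (p:ℝ)/(40*L) := by positivity
  have hmp : m ≤ p := by
    have h1 : (p:ℝ)/(40*L) ≤ (p:ℝ)/16 := by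
      apply div_le_div_of_nonneg_left hpR.le (by norm_num) (by linarith)
    have h2 : (m:ℝ) ≤ (p:ℝ) := by
      have hp2R : (2:ℝ) ≤ p := by exact_mod_cast hp2
      nlinarith
    exact_mod_cast h2
  have hmR : (0:ℝ) < m := lt_of_lt_of_le hdiv_pos hm1
  have hρk : ρ * (40*L) ≤ 1 := by
    have h1 := Real.add_one_le_exp (40*L)
    have h2 : ρ * Real.exp (40*L) = 1 := by rw [hρdef, ← Real.exp_add]; simp
    have h3 := mul_le_mul_of_nonneg_left h1 hρ0.le
    rw [h2] at h3
    nlinarith [hρ0]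
  have hkm : k ≤ (m:ℝ) := by
    have hρinv : ρ ≤ 1/(40*L) := by
      rw [le_div_iff₀ (by positivity)]; linarith
    have h1 : (p:ℝ)*ρ ≤ (p:ℝ)/(40*L) := by
      rw [div_eq_mul_inv, ← one_div]
      exact mul_le_mul_of_nonneg_left hρinv hpR.le
    linarith
  -- the random variables
  have hr : Real.toNNReal ρ ≤ 1 := Real.toNNReal_le_one.mpr hρ1
  set ν : Measure Bool := (PMF.bernoulli (Real.toNNReal ρ) hr).toMeasure with hν
  haveI : IsProbabilityMeasure ν := PMF.toMeasure.isProbabilityMeasure _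
  set μ : Measure (Fin p → Bool) := Measure.pi (fun _ => ν) with hμ
  haveI hμprob : IsProbabilityMeasure μ := by rw [hμ]; infer_instance
  set δ : Fin p → (Fin p → Bool) → ℝ := fun i ω => if ω i then 1 else 0 with hδ
  have hδmeas : ∀ i, Measurable (δ i) := fun i =>
    (Measurable.of_discrete (f := fun b : Bool => if b then (1:ℝ) else 0)).comp
      (measurable_pi_apply i)
  have hδ01 : ∀ i ω, δ i ω = 0 ∨ δ i ω = 1 := by
    intro i ω; by_cases hb : ω i <;> simp [hδ, hb]
  have hindep : iIndepFun δ μ :=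
    pi_eval_indep ν (fun b => if b then 1 else 0)
  have hsingle : ∀ i, μ {ω | δ i ω = 1} = ENNReal.ofReal (k / p) := by
    intro i
    have hset : {ω : Fin p → Bool | δ i ω = 1} = (fun ω : Fin p → Bool => ω i) ⁻¹' {true} := by
      ext ω; by_cases hb : ω i <;> simp [hδ, hb]
    have hkp' : k / p = ρ := by rw [hkdef]; field_simp
    rw [hset, hμ, pi_eval_meas ν, hν, bernoulli_true, hkp']; rfl
  have key := h p hp0 k hk0 hkp (Fin p → Bool) μ hμprob δ hδmeas hδ01 hindep hsingle
  -- the event A : first m coordinates are true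
  obtain ⟨A, hA⟩ : ∃ A : Set (Fin p → Bool),
      A = {ω | ∀ i : Fin p, (i:ℕ) < m → ω i = true} := ⟨_, rfl⟩
  have hAmeas : MeasurableSet A := by
    rw [hA]
    have : {ω : Fin p → Bool | ∀ i : Fin p, (i:ℕ) < m → ω i = true}
        = ⋂ i : Fin p, {ω : Fin p → Bool | (i:ℕ) < m → ω i = true} := by
      ext ω; simp [Set.mem_iInter]
    rw [this]
    apply MeasurableSet.iInter
    intro i
    by_cases hi : (i:ℕ) < m
    · have : {ω : Fin p → Bool | (i:ℕ) < m → ω i = true}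
          = (fun ω : Fin p → Bool => ω i) ⁻¹' {true} := by
        ext ω; simp [hi]
      rw [this]
      exact (measurable_pi_apply i) (measurableSet_singleton true)
    · have : {ω : Fin p → Bool | (i:ℕ) < m → ω i = true} = Set.univ := by
        ext ω; simp [hi]
      rw [this]; exact MeasurableSet.univ
  have hμA : μ A = (ENNReal.ofReal ρ)^m := by
    calc μ A = ν {true} ^ m := by rw [hA, hμ]; exact meas_A hmp ν
      _ = (ENNReal.ofReal ρ)^m := by rw [hν, bernoulli_true]; rfl
  have htoReal : (μ A).toReal = ρ^m := by
    rw [hμA, ENNReal.toReal_pow, ENNReal.toReal_ofReal hρ0.le]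
  -- basic bounds on the sum
  have hδnn : ∀ i ω, 0 ≤ δ i ω := by
    intro i ω; rcases hδ01 i ω with h1|h1 <;> rw [h1] <;> norm_num
  have hsum_nonneg : ∀ ω, 0 ≤ ∑ i, δ i ω :=
    fun ω => Finset.sum_nonneg (fun i _ => hδnn i ω)
  have hsum_le : ∀ ω, ∑ i, δ i ω ≤ p := by
    intro ω
    calc ∑ i, δ i ω ≤ ∑ _i : Fin p, (1:ℝ) :=
          Finset.sum_le_sum (fun i _ => by rcases hδ01 i ω with h1|h1 <;> rw [h1] <;> norm_num)
      _ = p := by simp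
  -- measurability and integrability of the integrand
  have hgmeas : Measurable (fun ω => |k⁻¹ * ∑ i, δ i ω - 1| ^ (p:ℝ)) := by
    have he : (fun ω => |k⁻¹ * ∑ i, δ i ω - 1| ^ (p:ℝ))
        = fun ω => |k⁻¹ * ∑ i, δ i ω - 1| ^ (p:ℕ) := by
      funext ω; rw [Real.rpow_natCast]
    rw [he]
    exact ((((Finset.measurable_sum Finset.univ (fun i _ => hδmeas i)).const_mul
      _).sub measurable_const).abs).pow_const p
  have hgbound : ∀ ω, |k⁻¹ * ∑ i, δ i ω - 1| ^ (p:ℝ) ≤ (k⁻¹ * p + 1) ^ (p:ℝ) := by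
    intro ω
    apply Real.rpow_le_rpow (abs_nonneg _) _ (Nat.cast_nonneg p)
    have h1 : |k⁻¹ * ∑ i, δ i ω - 1| ≤ |k⁻¹ * ∑ i, δ i ω| + 1 := by
      rw [sub_eq_add_neg]
      exact (abs_add_le _ _).trans (by rw [abs_neg, abs_one])
    have h2 : |k⁻¹ * ∑ i, δ i ω| = k⁻¹ * ∑ i, δ i ω :=
      abs_of_nonneg (mul_nonneg (inv_nonneg.mpr hk0.le) (hsum_nonneg ω))
    have h3 : k⁻¹ * ∑ i, δ i ω ≤ k⁻¹ * p :=
      mul_le_mul_of_nonneg_left (hsum_le ω) (inv_nonneg.mpr hk0.le)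
    linarith
  have hgint : Integrable (fun ω => |k⁻¹ * ∑ i, δ i ω - 1| ^ (p:ℝ)) μ := by
    apply (integrable_const ((k⁻¹ * p + 1) ^ (p:ℝ))).mono' hgmeas.aestronglyMeasurable
    refine ae_of_all _ (fun ω => ?_)
    rw [Real.norm_eq_abs, abs_of_nonneg (Real.rpow_nonneg (abs_nonneg _) _)]
    exact hgbound ω
  -- lower bound on the integrand on A
  obtain ⟨c, hc⟩ : ∃ c : ℝ, c = (m:ℝ)/k - 1 := ⟨_, rfl⟩
  have hc0 : 0 ≤ c := by rw [hc, sub_nonneg, le_div_iff₀ hk0]; linarith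
  have hgA : ∀ ω ∈ A, c ^ (p:ℝ) ≤ |k⁻¹ * ∑ i, δ i ω - 1| ^ (p:ℝ) := by
    intro ω hω
    rw [hA] at hω
    have hsum_ge : (m:ℝ) ≤ ∑ i, δ i ω := by
      classical
      have h1 : ∑ i ∈ Finset.univ.filter (fun i : Fin p => (i:ℕ) < m), δ i ω = m := by
        calc ∑ i ∈ Finset.univ.filter (fun i : Fin p => (i:ℕ) < m), δ i ω
            = ∑ _i ∈ Finset.univ.filter (fun i : Fin p => (i:ℕ) < m), (1:ℝ) :=
              Finset.sum_congr rfl (fun i hi => by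
                have hit := hω i (Finset.mem_filter.mp hi).2
                simp [hδ, hit])
          _ = ((Finset.univ.filter (fun i : Fin p => (i:ℕ) < m)).card : ℝ) := by
              rw [Finset.sum_const]; simp
          _ = m := by rw [card_filter_fin_lt hmp]
      have h2 : ∑ i ∈ Finset.univ.filter (fun i : Fin p => (i:ℕ) < m), δ i ω ≤ ∑ i, δ i ω :=
        Finset.sum_le_sum_of_subset_of_nonneg (Finset.filter_subset _ _)
          (fun i _ _ => hδnn i ω)
      linarith
    have h1 : c ≤ |k⁻¹ * ∑ i, δ i ω - 1| := by
      have h2 : c ≤ k⁻¹ * ∑ i, δ i ω - 1 := by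
        rw [hc, div_eq_inv_mul]
        have := mul_le_mul_of_nonneg_left hsum_ge (inv_nonneg.mpr hk0.le)
        linarith
      exact h2.trans (le_abs_self _)
    exact Real.rpow_le_rpow hc0 h1 (Nat.cast_nonneg p)
  -- integral lower bound
  have hstep1 : c ^ (p:ℝ) * ρ^m ≤ ∫ ω, |k⁻¹ * ∑ i, δ i ω - 1| ^ (p:ℝ) ∂μ := by
    have h1 : c ^ (p:ℝ) * (μ A).toReal ≤ ∫ ω in A, |k⁻¹ * ∑ i, δ i ω - 1| ^ (p:ℝ) ∂μ :=
      by have := setIntegral_ge_of_const_le hAmeas (measure_ne_top μ A) hgA hgint.integrableOn; rw [smul_eq_mul, mul_comm] at this; exact this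
    have h2 : ∫ ω in A, |k⁻¹ * ∑ i, δ i ω - 1| ^ (p:ℝ) ∂μ
        ≤ ∫ ω, |k⁻¹ * ∑ i, δ i ω - 1| ^ (p:ℝ) ∂μ :=
      setIntegral_le_integral hgint (ae_of_all _ fun ω => Real.rpow_nonneg (abs_nonneg _) _)
    rw [htoReal] at h1; linarith
  have hstep2 : c * ρ^((m:ℝ)/p) ≤ (∫ ω, |k⁻¹ * ∑ i, δ i ω - 1| ^ (p:ℝ) ∂μ) ^ (1/(p:ℝ)) := by
    have h1 : (c ^ (p:ℝ) * ρ^m) ^ (1/(p:ℝ))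
        ≤ (∫ ω, |k⁻¹ * ∑ i, δ i ω - 1| ^ (p:ℝ) ∂μ) ^ (1/(p:ℝ)) :=
      Real.rpow_le_rpow (by positivity) hstep1 (by positivity)
    have h2 : (c ^ (p:ℝ) * ρ^m) ^ (1/(p:ℝ)) = c * ρ^((m:ℝ)/p) := by
      rw [Real.mul_rpow (Real.rpow_nonneg hc0 _) (pow_nonneg hρ0.le m)]
      congr 1
      · rw [← Real.rpow_mul hc0, mul_one_div, div_self hpR.ne', Real.rpow_one]
      · rw [← Real.rpow_natCast ρ m, ← Real.rpow_mul hρ0.le, mul_one_div]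
    rw [← h2]; exact h1
  -- lower bound ρ^(m/p) ≥ 0.95/e
  have hXlow : 0.95 * (Real.exp 1)⁻¹ ≤ ρ^((m:ℝ)/p) := by
    have hrep : ρ^((m:ℝ)/p) = Real.exp (-(40*L) * ((m:ℝ)/p)) := by
      rw [hρdef, ← Real.exp_mul]
    have h40L : (0:ℝ) < 40*L := by linarith
    have harg : -(1.05:ℝ) ≤ -(40*L) * ((m:ℝ)/p) := by
      have h3 : ((m:ℝ) - 1) ≤ (p:ℝ)/(40*L) := by linarith
      have h4 := (le_div_iff₀ h40L).mp h3
      have h5 : (40*L)*((m:ℝ)/p) ≤ 1.05 := by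
        rw [← mul_div_assoc, div_le_iff₀ hpR]
        nlinarith [hpL, h4]
      linarith [neg_le_neg h5]
    have h6 : Real.exp (-(1.05:ℝ)) ≤ Real.exp (-(40*L) * ((m:ℝ)/p)) :=
      Real.exp_le_exp.mpr harg
    have h7 : Real.exp (-(1.05:ℝ)) = Real.exp (-(0.05:ℝ)) * (Real.exp 1)⁻¹ := by
      rw [← Real.exp_neg 1, ← Real.exp_add]; norm_num
    have h8 : (0.95:ℝ) ≤ Real.exp (-(0.05:ℝ)) := by
      have := Real.add_one_le_exp (-(0.05:ℝ)); linarith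
    have h9 : 0.95 * (Real.exp 1)⁻¹ ≤ Real.exp (-(1.05:ℝ)) := by
      rw [h7]
      exact mul_le_mul_of_nonneg_right h8 hEinv0.le
    rw [hrep]
    linarith
  -- combine with key
  have hmain : c * (0.95 * (Real.exp 1)⁻¹) ≤ C * Real.sqrt ((p:ℝ)/k) + f p / k :=
    le_trans (mul_le_mul_of_nonneg_left hXlow hc0) (le_trans hstep2 key)
  -- multiply through by k
  have hsqrt : Real.sqrt ((p:ℝ)/k) = Real.exp (20*L) := by
    have h1 : (p:ℝ)/k = Real.exp (20*L)^2 := by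
      rw [hkdef, hρdef, Real.exp_neg]
      rw [sq, ← Real.exp_add]
      have : 20*L + 20*L = 40*L := by ring
      rw [this]
      field_simp
    rw [h1, Real.sqrt_sq (Real.exp_pos _).le]
  have hCk : C * Real.sqrt ((p:ℝ)/k) * k = p * Real.exp (-(19*L)) := by
    rw [hsqrt, hCe, hkdef, hρdef]
    rw [show Real.exp L * Real.exp (20*L) * ((p:ℝ) * Real.exp (-(40*L)))
        = (p:ℝ) * (Real.exp L * (Real.exp (20*L) * Real.exp (-(40*L)))) from by ring,
      ← Real.exp_add, ← Real.exp_add]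
    congr 2
    ring
  have hck : c * k = (m:ℝ) - k := by rw [hc]; field_simp
  have h6 : ((m:ℝ) - k) * (0.95 * (Real.exp 1)⁻¹) ≤ p * Real.exp (-(19*L)) + f p := by
    have h7 := mul_le_mul_of_nonneg_right hmain hk0.le
    have e1 : (C * Real.sqrt ((p:ℝ)/k) + f p / k) * k = p * Real.exp (-(19*L)) + f p := by
      rw [add_mul, div_mul_cancel₀ _ hk0.ne', ← hCk]
    have e2 : (c * (0.95 * (Real.exp 1)⁻¹)) * k = ((m:ℝ) - k) * (0.95 * (Real.exp 1)⁻¹) := by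
      rw [← hck]; ring
    rw [e1, e2] at h7
    exact h7
  -- final numeric conclusion
  have hkρ : k = p * ρ := hkdef
  have he19 : (0:ℝ) < Real.exp (-(19*L)) := Real.exp_pos _
  have h40' : L * ρ ≤ 0.0004 := by rw [hρdef]; exact h40
  have hnum : (1:ℝ)/200 ≤ (1/40 - L*ρ)*(0.95*(Real.exp 1)⁻¹) - L*Real.exp (-(19*L)) :=
    numeric_final h40' h19 (mul_pos hL0 hρ0) hinv2
  have expand : ((p:ℝ)/(40*L) - p*ρ)*(0.95*(Real.exp 1)⁻¹) - p*Real.exp (-(19*L))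
      = ((p:ℝ)/L)*((1/40 - L*ρ)*(0.95*(Real.exp 1)⁻¹) - L*Real.exp (-(19*L))) := by
    field_simp
  have hpos : (0:ℝ) ≤ (p:ℝ)/L := by positivity
  have hfin1 : ((p:ℝ)/(40*L) - p*ρ)*(0.95*(Real.exp 1)⁻¹) ≤ ((m:ℝ) - k)*(0.95*(Real.exp 1)⁻¹) := by
    apply mul_le_mul_of_nonneg_right _ (by positivity)
    rw [hkρ]
    linarith
  have hfin2 : (p:ℝ)/(200*L) ≤ ((p:ℝ)/(40*L) - p*ρ)*(0.95*(Real.exp 1)⁻¹) - p*Real.exp (-(19*L)) := by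
    rw [expand]
    calc (p:ℝ)/(200*L) = ((p:ℝ)/L)*(1/200) := by ring
      _ ≤ ((p:ℝ)/L)*((1/40 - L*ρ)*(0.95*(Real.exp 1)⁻¹) - L*Real.exp (-(19*L))) :=
          mul_le_mul_of_nonneg_left hnum hpos
  have : (p:ℝ)/(200*L) ≤ f p := by linarith
  exact this
end
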